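/- For every integer k ≥ 1, the characteristic polynomial det(x·I - R_{4k}) of the 4k×4k matrix R_{4k} over the field ℤ/3ℤ equals (x^4 + 1)^k = (x^2 - x - 1)^k (x^2 + x - 1)^k. -/

import Mathlib

open Polynomial

/-- `R n` over `ℤ/3ℤ`: the `(i,j)` entry (1-based) is `C(i-1, n-j)` mod 3. -/
def binR3 (n : ℕ) : Matrix (Fin n) (Fin n) (ZMod 3) :=
  fun i j => (Nat.choose i (n - 1 - j) : ZMod 3)

namespace Stmt6Aux
open Finset

lemma key {K : Type*} [Field K] (q1 q2 : K[X]) (hq2 : q2 ≠ 0) (a b : K) (m e : ℕ) :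
    ∑ l ∈ Finset.range (m + e + 1),
      C (((X - C a) ^ m * (X - C b) ^ e).coeff l) * q1 ^ l * q2 ^ (m + e - l)
      = (q1 - C a * q2) ^ m * (q1 - C b * q2) ^ e := by
  set u : K[X] := (X - C a) ^ m * (X - C b) ^ e with hu
  have hdeg : u.natDegree < m + e + 1 := by
    have h := natDegree_mul_le (p := (X - C a) ^ m) (q := (X - C b) ^ e)
    simp only [natDegree_pow, natDegree_X_sub_C, mul_one, ← hu] at h
    omega
  have hinj := IsFractionRing.injective K[X] (RatFunc K)
  apply hinj
  set φ := algebraMap K[X] (RatFunc K) with hφ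
  have hQ2 : φ q2 ≠ 0 := fun h => hq2 (hinj (by simpa using h))
  set T : RatFunc K := φ q1 / φ q2 with hT
  rw [map_sum]
  have hterm : ∀ l ∈ Finset.range (m + e + 1),
      φ (C (u.coeff l) * q1 ^ l * q2 ^ (m + e - l))
        = φ q2 ^ (m + e) * (u.coeff l • T ^ l) := by
    intro l hl
    rw [Finset.mem_range] at hl
    have hl' : l ≤ m + e := by omega
    rw [map_mul, map_mul, map_pow, map_pow, pow_sub₀ _ hQ2 hl']
    rw [Algebra.smul_def, IsScalarTower.algebraMap_apply K K[X] (RatFunc K)]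
    rw [hT, div_pow]
    field_simp
    simp only [hφ, Polynomial.algebraMap_eq, RatFunc.algebraMap_C]
    ring
  rw [Finset.sum_congr rfl hterm, ← Finset.mul_sum, ← aeval_eq_sum_range' hdeg T]
  have haeval : aeval T u = (T - algebraMap K _ a) ^ m * (T - algebraMap K _ b) ^ e := by
    rw [hu]; simp [map_mul, map_pow, map_sub, aeval_X, aeval_C]
  rw [haeval]
  rw [map_mul, map_pow, map_pow, map_sub, map_sub, map_mul, map_mul]
  rw [pow_add, mul_mul_mul_comm, ← mul_pow, ← mul_pow]
  have h1 : φ q2 * (T - algebraMap K _ a) = φ q1 - φ (C a) * φ q2 := by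
    rw [hT, IsScalarTower.algebraMap_apply K K[X] (RatFunc K)]
    field_simp
    simp only [hφ, Polynomial.algebraMap_eq, RatFunc.algebraMap_C]
  have h2 : φ q2 * (T - algebraMap K _ b) = φ q1 - φ (C b) * φ q2 := by
    rw [hT, IsScalarTower.algebraMap_apply K K[X] (RatFunc K)]
    field_simp
    simp only [hφ, Polynomial.algebraMap_eq, RatFunc.algebraMap_C]
  rw [h1, h2]

lemma coeff_aux {K : Type*} [CommRing K] (n l j : ℕ) (hl : l < n) (hj : j < n) :
    (((1 + X : K[X]) ^ l) * X ^ (n - 1 - l)).coeff j = (l.choose (n - 1 - j) : K) := by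
  rw [coeff_mul_X_pow']
  by_cases h : n - 1 - l ≤ j
  · rw [if_pos h, coeff_one_add_X_pow]
    congr 1
    have : j - (n - 1 - l) = l - (n - 1 - j) := by omega
    rw [this, Nat.choose_symm (by omega)]
  · rw [if_neg h, Nat.choose_eq_zero_of_lt (by omega), Nat.cast_zero]

lemma charpoly_conj {ι R : Type*} [Fintype ι] [DecidableEq ι] [CommRing R]
    (P Q D : Matrix ι ι R) (h1 : P * Q = 1) (h2 : Q * P = 1) :
    (Q * D * P).charpoly = D.charpoly := by
  clear h1
  have hQP : (C : R →+* R[X]).mapMatrix Q * (C : R →+* R[X]).mapMatrix P = 1 := by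
    rw [← map_mul, h2, map_one]
  have hkey : Matrix.charmatrix (Q * D * P)
      = (C : R →+* R[X]).mapMatrix Q * Matrix.charmatrix D * (C : R →+* R[X]).mapMatrix P := by
    unfold Matrix.charmatrix
    rw [mul_sub, sub_mul, map_mul, map_mul]
    congr 1
    have hcomm := (Matrix.scalar_commute (X : R[X]) (Commute.all X)
      ((C : R →+* R[X]).mapMatrix Q)).eq
    rw [← hcomm, mul_assoc, hQP, mul_one]
  rw [Matrix.charpoly, Matrix.charpoly, hkey, Matrix.det_mul, Matrix.det_mul]
  have hdet : ((C : R →+* R[X]).mapMatrix Q).det * ((C : R →+* R[X]).mapMatrix P).det = 1 := by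
    rw [← Matrix.det_mul, hQP, Matrix.det_one]
  calc ((C : R →+* R[X]).mapMatrix Q).det * (Matrix.charmatrix D).det
      * ((C : R →+* R[X]).mapMatrix P).det
      = (Matrix.charmatrix D).det * (((C : R →+* R[X]).mapMatrix Q).det
        * ((C : R →+* R[X]).mapMatrix P).det) := by ring
    _ = (Matrix.charmatrix D).det := by rw [hdet, mul_one]

lemma prod4 {K : Type*} [CommRing K] (t c : K) (ht : t ^ 2 = -1) (hc : c ^ 4 = -1) (k : ℕ) :
    ∏ m ∈ Finset.range (4 * k), ((X : K[X]) - C (c * t ^ m)) = ((X : K[X]) ^ 4 + 1) ^ k := by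
  induction k with
  | zero => simp
  | succ k ih =>
    have ht4 : t ^ (4 * k) = 1 := by
      rw [show 4 * k = 2 * (2 * k) by ring, pow_mul, ht, pow_mul, neg_one_sq, one_pow]
    have e1 : t ^ (4 * k + 1) = t := by rw [pow_succ, ht4, one_mul]
    have e2 : t ^ (4 * k + 1 + 1) = -1 := by rw [pow_succ, e1, ← pow_two, ht]
    have e3 : t ^ (4 * k + 1 + 1 + 1) = -t := by rw [pow_succ, e2]; ring
    rw [show 4 * (k + 1) = 4 * k + 1 + 1 + 1 + 1 by ring, Finset.prod_range_succ,
      Finset.prod_range_succ, Finset.prod_range_succ, Finset.prod_range_succ, ih,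
      ht4, e1, e2, e3]
    have htC : (C t : K[X]) ^ 2 = -1 := by rw [← map_pow, ht, map_neg, map_one]
    have hcC : (C c : K[X]) ^ 4 = -1 := by rw [← map_pow, hc, map_neg, map_one]
    simp only [map_mul, map_neg, map_one, mul_one, mul_neg]
    rw [pow_succ]
    linear_combination (((X : K[X]) ^ 4 + 1) ^ k * ((C c) ^ 4 - (C c) ^ 2 * X ^ 2)) * htC
      - (((X : K[X]) ^ 4 + 1) ^ k) * hcC

section Main

variable {K : Type*} [Field K]

/-- eigenvector matrix -/
noncomputable def Pm (r s : K) (n : ℕ) : Matrix (Fin n) (Fin n) K :=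
  fun m j => ((X - C r) ^ (m : ℕ) * (X - C s) ^ (n - 1 - (m : ℕ))).coeff j

/-- inverse (up to scalar) of `Pm` -/
noncomputable def Qm (r s : K) (n : ℕ) : Matrix (Fin n) (Fin n) K :=
  fun l j => ((C s * X - C r) ^ (l : ℕ) * (X - 1) ^ (n - 1 - (l : ℕ))).coeff j

/-- diagonal eigenvalue matrix -/
noncomputable def Dm (r : K) (n : ℕ) : Matrix (Fin n) (Fin n) K :=
  Matrix.diagonal fun m : Fin n => r ^ (n - 1) * (r + 1) ^ (m : ℕ)

variable [Algebra (ZMod 3) K] (r : K)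

lemma char3 : (3 : K) = 0 := by
  rw [show (3 : K) = algebraMap (ZMod 3) K 3 from (map_ofNat _ 3).symm,
    show (3 : ZMod 3) = 0 from rfl, map_zero]

lemma char3C : (3 : K[X]) = 0 := by
  rw [show (3 : K[X]) = C (3 : K) from (map_ofNat C 3).symm, char3, map_zero]

lemma lemA (hr : r ^ 2 = r + 1) (n : ℕ) (hn1 : 1 ≤ n) :
    Pm r (r * (r + 1)) n * (binR3 n).map (algebraMap (ZMod 3) K)
      = Dm r n * Pm r (r * (r + 1)) n := by
  have h3C : (3 : K[X]) = 0 := char3C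
  obtain ⟨s, hs⟩ : ∃ s' : K, s' = r * (r + 1) := ⟨_, rfl⟩
  rw [← hs]
  have hCs : (C s : K[X]) = C r * (C r + 1) := by rw [hs, C_mul, C_add, C_1]
  have hCr2 : (C r : K[X]) ^ 2 = C r + 1 := by rw [← map_pow, hr, C_add, C_1]
  ext m j
  rw [Matrix.mul_apply, Dm, Matrix.diagonal_mul]
  have hstep : ∀ l : Fin n, Pm r s n m l * ((binR3 n).map (algebraMap (ZMod 3) K)) l j
      = (C (((X - C r) ^ (m : ℕ) * (X - C s) ^ (n - 1 - (m : ℕ))).coeff (l : ℕ))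
          * ((1 + X : K[X]) ^ (l : ℕ) * X ^ (n - 1 - (l : ℕ)))).coeff (j : ℕ) := by
    intro l
    rw [coeff_C_mul, coeff_aux n l j l.isLt j.isLt]
    simp only [Matrix.map_apply, binR3, map_natCast, Pm]
  rw [Finset.sum_congr rfl (fun l _ => hstep l)]
  simp only [← mul_assoc]
  rw [← Polynomial.finset_sum_coeff]
  have hkey := key (1 + X : K[X]) X X_ne_zero r s (m : ℕ) (n - 1 - (m : ℕ))
  rw [show (m : ℕ) + (n - 1 - (m : ℕ)) = n - 1 from by omega,
    show n - 1 + 1 = n from by omega, Finset.sum_range] at hkey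
  rw [hkey]
  have f1 : (1 + X - C r * X : K[X]) = C s * (X - C r) := by
    rw [hCs]
    linear_combination (C r + 2 - (X : K[X])) * hCr2 + (C r + 1 - C r * X) * h3C
  have f2 : (1 + X - C s * X : K[X]) = C r * (X - C s) := by
    rw [hCs]
    linear_combination (C r + 2 - (X : K[X])) * hCr2 + (C r + 1 - C r * X) * h3C
  rw [f1, f2, mul_pow, mul_pow, ← C_pow, ← C_pow]
  have e2 : C (s ^ (m : ℕ)) * (X - C r) ^ (m : ℕ)
      * (C (r ^ (n - 1 - (m : ℕ))) * (X - C s) ^ (n - 1 - (m : ℕ)))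
      = C (s ^ (m : ℕ) * r ^ (n - 1 - (m : ℕ)))
        * ((X - C r) ^ (m : ℕ) * (X - C s) ^ (n - 1 - (m : ℕ))) := by
    rw [C_mul (a := s ^ (m : ℕ)) (b := r ^ (n - 1 - (m : ℕ)))]; ring
  rw [e2, coeff_C_mul]
  show _ = r ^ (n - 1) * (r + 1) ^ (m : ℕ) * Pm r s n m j
  rw [show Pm r s n m j = ((X - C r) ^ (m : ℕ)
    * (X - C s) ^ (n - 1 - (m : ℕ))).coeff (j : ℕ) from rfl]
  congr 1
  rw [hs, mul_pow, mul_right_comm, ← pow_add,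
    show (m : ℕ) + (n - 1 - (m : ℕ)) = n - 1 from by omega]

lemma lemB (hr : r ^ 2 = r + 1) (n : ℕ) (hn1 : 1 ≤ n) :
    Pm r (r * (r + 1)) n * Qm r (r * (r + 1)) n
      = ((r + 1) ^ (n - 1)) • (1 : Matrix (Fin n) (Fin n) K) := by
  obtain ⟨s, hs⟩ : ∃ s' : K, s' = r * (r + 1) := ⟨_, rfl⟩
  rw [← hs]
  have hCs : (C s : K[X]) = C r * (C r + 1) := by rw [hs, C_mul, C_add, C_1]
  have hCr2 : (C r : K[X]) ^ 2 = C r + 1 := by rw [← map_pow, hr, C_add, C_1]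
  ext m j
  rw [Matrix.mul_apply]
  have hstep : ∀ l : Fin n, Pm r s n m l * Qm r s n l j
      = (C (((X - C r) ^ (m : ℕ) * (X - C s) ^ (n - 1 - (m : ℕ))).coeff (l : ℕ))
          * ((C s * X - C r) ^ (l : ℕ) * (X - 1) ^ (n - 1 - (l : ℕ)))).coeff (j : ℕ) := by
    intro l
    rw [coeff_C_mul]
    rfl
  rw [Finset.sum_congr rfl (fun l _ => hstep l)]
  simp only [← mul_assoc]
  rw [← Polynomial.finset_sum_coeff]
  have hq2 : (X - 1 : K[X]) ≠ 0 := by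
    have h := X_sub_C_ne_zero (1 : K)
    rwa [map_one] at h
  have hkey := key (C s * X - C r) (X - 1) hq2 r s (m : ℕ) (n - 1 - (m : ℕ))
  rw [show (m : ℕ) + (n - 1 - (m : ℕ)) = n - 1 from by omega,
    show n - 1 + 1 = n from by omega, Finset.sum_range] at hkey
  rw [hkey]
  have f3 : (C s * X - C r - C r * (X - 1) : K[X]) = C (r + 1) * X := by
    rw [hCs, C_add, C_1]
    linear_combination (X : K[X]) * hCr2
  have f4 : (C s * X - C r - C s * (X - 1) : K[X]) = C (r + 1) := by
    rw [hCs, C_add, C_1]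
    linear_combination hCr2
  rw [f3, f4, mul_pow, ← C_pow, ← C_pow]
  have e2 : C ((r + 1) ^ (m : ℕ)) * X ^ (m : ℕ) * C ((r + 1) ^ (n - 1 - (m : ℕ)))
      = C ((r + 1) ^ (n - 1)) * X ^ (m : ℕ) := by
    rw [mul_right_comm, ← C_mul, ← pow_add,
      show (m : ℕ) + (n - 1 - (m : ℕ)) = n - 1 from by omega]
  rw [e2, coeff_C_mul, coeff_X_pow]
  rw [Matrix.smul_apply, Matrix.one_apply]
  by_cases hmj : m = j
  · subst hmj; simp
  · have hne : (j : ℕ) ≠ (m : ℕ) := fun h => hmj (Fin.ext h.symm)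
    simp [hmj, hne]

lemma charpoly_over (hr : r ^ 2 = r + 1) (k : ℕ) (hk : 1 ≤ k) :
    ((binR3 (4 * k)).map (algebraMap (ZMod 3) K)).charpoly = ((X : K[X]) ^ 4 + 1) ^ k := by
  have h3 : (3 : K) = 0 := char3
  set n := 4 * k with hn
  have hn1 : 1 ≤ n := by omega
  have ht2 : (r + 1 : K) ^ 2 = -1 := by linear_combination hr + (r + 1) * h3
  have ht0 : (r + 1 : K) ≠ 0 := by
    intro h
    apply one_ne_zero (α := K)
    linear_combination ht2 - (r + 1) * h
  have hc : ((r + 1 : K) ^ (n - 1)) ≠ 0 := pow_ne_zero _ ht0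
  have hB := lemB r hr n hn1
  have hPQ : Pm r (r * (r + 1)) n * (((r + 1) ^ (n - 1))⁻¹ • Qm r (r * (r + 1)) n) = 1 := by
    rw [Matrix.mul_smul, hB, smul_smul, inv_mul_cancel₀ hc, one_smul]
  have hQP := mul_eq_one_comm.mp hPQ
  have hA := lemA r hr n hn1
  have hRm : (binR3 n).map (algebraMap (ZMod 3) K)
      = (((r + 1) ^ (n - 1))⁻¹ • Qm r (r * (r + 1)) n) * Dm r n * Pm r (r * (r + 1)) n := by
    calc (binR3 n).map (algebraMap (ZMod 3) K)
        = 1 * (binR3 n).map (algebraMap (ZMod 3) K) := (one_mul _).symm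
      _ = ((((r + 1) ^ (n - 1))⁻¹ • Qm r (r * (r + 1)) n) * Pm r (r * (r + 1)) n)
          * (binR3 n).map (algebraMap (ZMod 3) K) := by rw [hQP]
      _ = (((r + 1) ^ (n - 1))⁻¹ • Qm r (r * (r + 1)) n)
          * (Pm r (r * (r + 1)) n * (binR3 n).map (algebraMap (ZMod 3) K)) := by
            rw [Matrix.mul_assoc]
      _ = (((r + 1) ^ (n - 1))⁻¹ • Qm r (r * (r + 1)) n)
          * (Dm r n * Pm r (r * (r + 1)) n) := by rw [hA]
      _ = _ := by rw [← Matrix.mul_assoc]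
  rw [hRm, charpoly_conj _ _ _ hPQ hQP]
  have hD : (Dm r n).charpoly
      = ∏ m : Fin n, ((X : K[X]) - C (r ^ (n - 1) * (r + 1) ^ (m : ℕ))) := by
    rw [Dm, Matrix.charpoly_of_upperTriangular _ (Matrix.blockTriangular_diagonal _)]
    simp [Matrix.diagonal_apply_eq]
  rw [hD]
  have hr4 : (r : K) ^ 4 = -1 := by linear_combination (r ^ 2 + r + 2) * hr + (r + 1) * h3
  have hc4 : ((r : K) ^ (n - 1)) ^ 4 = -1 := by
    rw [← pow_mul, Nat.mul_comm, pow_mul, hr4]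
    exact Odd.neg_one_pow ⟨2 * k - 1, by omega⟩
  have hp := prod4 (r + 1 : K) (r ^ (n - 1)) ht2 hc4 k
  rw [← hn, Finset.prod_range] at hp
  rw [hp]

end Main

theorem main_charpoly (k : ℕ) (hk : 1 ≤ k) :
    (binR3 (4 * k)).charpoly = (X ^ 4 + 1 : (ZMod 3)[X]) ^ k := by
  set q : (ZMod 3)[X] := X ^ 2 - X - 1 with hq
  have hdeg : q.natDegree = 2 := by rw [hq]; compute_degree!
  have hq0 : q ≠ 0 := fun h => by simp [h] at hdeg
  have hirr : Irreducible q := by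
    rw [Polynomial.irreducible_iff_roots_eq_zero_of_degree_le_three (by omega) (by omega)]
    rw [Multiset.eq_zero_iff_forall_notMem]
    intro a ha
    rw [mem_roots hq0] at ha
    have ha' : a ^ 2 - a - 1 = 0 := by
      simpa [hq, IsRoot.def, eval_sub, eval_pow, eval_X, eval_one] using ha
    have hall : ∀ b : ZMod 3, b ^ 2 - b - 1 ≠ 0 := by decide
    exact hall a ha'
  haveI : Fact (Irreducible q) := ⟨hirr⟩
  have hr : (AdjoinRoot.root q) ^ 2 = AdjoinRoot.root q + 1 := by
    have h0 := AdjoinRoot.eval₂_root q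
    rw [hq] at h0
    simp only [eval₂_sub, eval₂_pow, eval₂_X, eval₂_one] at h0
    linear_combination h0
  have hco := charpoly_over (AdjoinRoot.root q) hr k hk
  have hmap := Matrix.charpoly_map (binR3 (4 * k)) (algebraMap (ZMod 3) (AdjoinRoot q))
  apply Polynomial.map_injective (algebraMap (ZMod 3) (AdjoinRoot q))
    (RingHom.injective _)
  rw [← hmap, hco]
  simp [Polynomial.map_pow, Polynomial.map_add, Polynomial.map_one, Polynomial.map_X]

end Stmt6Aux

theorem stmt_6 (k : ℕ) (hk : 1 ≤ k) :
    (binR3 (4 * k)).charpoly = (X ^ 4 + 1 : (ZMod 3)[X]) ^ k ∧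
      ((X ^ 4 + 1 : (ZMod 3)[X]) ^ k =
        (X ^ 2 - X - 1) ^ k * (X ^ 2 + X - 1) ^ k) := by
  constructor
  · exact Stmt6Aux.main_charpoly k hk
  · rw [← mul_pow]
    congr 1
    have h3 : (3 : (ZMod 3)[X]) = 0 := by
      rw [show (3 : (ZMod 3)[X]) = C (3 : ZMod 3) from (map_ofNat C 3).symm,
        show (3 : ZMod 3) = 0 from rfl, map_zero]
    linear_combination (X ^ 2 : (ZMod 3)[X]) * h3
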